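/- Let (N_1,…,N_r) be a lattice path presentation with parameters m ≥ 0 and r ≥ 1, and let n be the incidence function of M[N]. Every nontrivial connected flat X of the lattice path matroid M[N] is an interval of consecutive integers in {1,…,m+r}, and n(X) is an interval of exactly r(X) consecutive integers in {1,…,r}. -/

import Mathlib

open Set
open scoped Matroid

namespace LPM

variable {α β : Type*}

/-- `I` is a partial transversal of the set family `N`: there is an injection
matching each element of `I` to an index of a member of the family containing it. -/
def IsPT {ι : Type*} (N : ι → Set α) (I : Set α) : Prop :=
  ∃ f : I → ι, Function.Injective f ∧ ∀ x : I, (x : α) ∈ N (f x)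

/-- `I` is a (full) transversal of the set family `N`: there is a bijection
matching each element of `I` to an index of a member of the family containing it. -/
def IsT {ι : Type*} (N : ι → Set α) (I : Set α) : Prop :=
  ∃ f : I → ι, Function.Bijective f ∧ ∀ x : I, (x : α) ∈ N (f x)

/-- A lattice path presentation with nullity `m` and rank `r`: a sequence of
intervals `[l i, g i] ⊆ {1, …, m + r}` whose left endpoints strictly increase
and whose right endpoints strictly increase. -/
structure LPP (m r : ℕ) where
  l : Fin r → ℕ
  g : Fin r → ℕ
  l_strictMono : StrictMono l
  g_strictMono : StrictMono g
  one_le_l : ∀ i, 1 ≤ l i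
  l_le_g : ∀ i, l i ≤ g i
  g_le : ∀ i, g i ≤ m + r

/-- The intervals of a lattice path presentation. -/
def LPP.N {m r : ℕ} (P : LPP m r) (i : Fin r) : Set ℕ := Set.Icc (P.l i) (P.g i)

/-- `M` is the lattice path matroid `M[N]` of the presentation `P`: the ground set
is `{1, …, m + r}` and the independent sets are exactly the partial transversals
of the intervals of `P`. -/
def IsLPMOf {m r : ℕ} (P : LPP m r) (M : Matroid ℕ) : Prop :=
  M.E = Set.Icc 1 (m + r) ∧
    ∀ I : Set ℕ, M.Indep I ↔ I ⊆ Set.Icc 1 (m + r) ∧ IsPT P.N I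

/-- `M` is isomorphic to `M'`: there is a bijection between the ground sets
carrying independent sets to independent sets in both directions. -/
def IsoTo (M : Matroid α) (M' : Matroid β) : Prop :=
  ∃ f : α → β, Set.BijOn f M.E M'.E ∧ ∀ I ⊆ M.E, (M.Indep I ↔ M'.Indep (f '' I))

/-- A lattice path matroid: a matroid isomorphic to `M[N]` for some lattice path
presentation (presentations with `r = 0` give the rank-zero matroids). -/
def IsLPMatroid (M : Matroid α) : Prop :=
  ∃ (m r : ℕ) (P : LPP m r) (M₀ : Matroid ℕ), IsLPMOf P M₀ ∧ IsoTo M M₀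

/-- A circuit of a matroid: a minimal dependent subset of the ground set. -/
def Circuit (M : Matroid α) (C : Set α) : Prop :=
  C ⊆ M.E ∧ ¬ M.Indep C ∧ ∀ D : Set α, D ⊂ C → M.Indep D

/-- A matroid is connected if every two distinct elements of the ground set lie
in a common circuit. -/
def Connected (M : Matroid α) : Prop :=
  ∀ x ∈ M.E, ∀ y ∈ M.E, x ≠ y → ∃ C, Circuit M C ∧ x ∈ C ∧ y ∈ C

/-- The rank of a set in a matroid: the supremum of the cardinalities of its
independent subsets. -/
noncomputable def rk (M : Matroid α) (X : Set α) : ℕ :=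
  sSup {n | ∃ I, I ⊆ X ∧ M.Indep I ∧ I.ncard = n}

/-- A nontrivial connected flat: a flat that is dependent and whose restriction
is a connected matroid. -/
def NTConnFlat (M : Matroid α) (X : Set α) : Prop :=
  M.IsFlat X ∧ ¬ M.Indep X ∧ Connected (M ↾ X)

/-- Deletion of a set from a matroid. -/
def delete (M : Matroid α) (D : Set α) : Matroid α := M ↾ (M.E \ D)

/-- Contraction of a set in a matroid, defined via duality. -/
def contract (M : Matroid α) (C : Set α) : Matroid α := (delete M✶ C)✶

/-- `Minor M' M` means that `M'` is obtained from `M` by a sequence of deletions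
and contractions. -/
inductive Minor : Matroid α → Matroid α → Prop
  | refl (M : Matroid α) : Minor M M
  | del {M' M : Matroid α} (D : Set α) (h : Minor M' M) : Minor (delete M' D) M
  | con {M' M : Matroid α} (C : Set α) (h : Minor M' M) : Minor (contract M' C) M

end LPM

namespace LPM

variable {m r : ℕ} (P : LPP m r)

/-- A strictly monotone `Fin r → ℕ` grows at least by the index gap. -/
lemma strictMono_gap {f : Fin r → ℕ} (hf : StrictMono f) :
    ∀ (d : ℕ) (i j : Fin r), (j : ℕ) = i + d → f i + d ≤ f j := by
  intro d
  induction d with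
  | zero => intro i j h; have hij : i = j := Fin.ext (by omega); rw [hij]; omega
  | succ d ih =>
    intro i j h
    have hlt : (i : ℕ) + d < r := by have := j.isLt; omega
    have h1 := ih i ⟨i + d, hlt⟩ rfl
    have h2 : f ⟨i + d, hlt⟩ < f j := hf (by simp [Fin.lt_def, h])
    omega

lemma strictMono_gap' {f : Fin r → ℕ} (hf : StrictMono f) (i j : Fin r) (hij : i ≤ j) :
    f i + ((j : ℕ) - i) ≤ f j :=
  strictMono_gap hf ((j : ℕ) - i) i j (by have := Fin.le_def.1 hij; omega)

def NonLoop (x : ℕ) : Prop := ∃ i : Fin r, P.l i ≤ x ∧ x ≤ P.g i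

noncomputable def lo (x : ℕ) : ℕ := sInf {v : ℕ | ∃ h : v < r, x ≤ P.g ⟨v, h⟩}

noncomputable def hi (x : ℕ) : ℕ := sSup {v : ℕ | ∃ h : v < r, P.l ⟨v, h⟩ ≤ x}

variable {P}

lemma lo_mem {x : ℕ} (hx : NonLoop P x) :
    ∃ h : lo P x < r, x ≤ P.g ⟨lo P x, h⟩ := by
  obtain ⟨i, _, hg⟩ := hx
  exact Nat.sInf_mem (⟨i, i.isLt, hg⟩ : {v : ℕ | ∃ h : v < r, x ≤ P.g ⟨v, h⟩}.Nonempty)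

lemma lo_lt {x : ℕ} (hx : NonLoop P x) : lo P x < r := (lo_mem hx).1

lemma lo_le {x : ℕ} (i : Fin r) (hg : x ≤ P.g i) : lo P x ≤ i :=
  Nat.sInf_le ⟨i.isLt, by simpa using hg⟩

lemma le_g_of_lo_le {x : ℕ} (hx : NonLoop P x) (i : Fin r) (h : lo P x ≤ i) :
    x ≤ P.g i := by
  obtain ⟨hlt, hg⟩ := lo_mem hx
  exact hg.trans (P.g_strictMono.monotone (show (⟨lo P x, hlt⟩ : Fin r) ≤ i from h))

lemma hi_bddAbove : BddAbove {v : ℕ | ∃ h : v < r, P.l ⟨v, h⟩ ≤ x} :=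
  ⟨r, fun v hv => hv.1.le⟩

lemma hi_mem {x : ℕ} (hx : NonLoop P x) :
    ∃ h : hi P x < r, P.l ⟨hi P x, h⟩ ≤ x := by
  obtain ⟨i, hl, _⟩ := hx
  exact Nat.sSup_mem (⟨(i : ℕ), i.isLt, by simpa using hl⟩ : {v : ℕ | ∃ h : v < r, P.l ⟨v, h⟩ ≤ x}.Nonempty) hi_bddAbove

lemma hi_lt {x : ℕ} (hx : NonLoop P x) : hi P x < r := (hi_mem hx).1

lemma le_hi {x : ℕ} (i : Fin r) (hl : P.l i ≤ x) : (i : ℕ) ≤ hi P x :=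
  le_csSup hi_bddAbove ⟨i.isLt, by simpa using hl⟩

lemma l_le_of_le_hi {x : ℕ} (hx : NonLoop P x) (i : Fin r) (h : (i : ℕ) ≤ hi P x) :
    P.l i ≤ x := by
  obtain ⟨hlt, hl⟩ := hi_mem hx
  exact (P.l_strictMono.monotone (show i ≤ (⟨hi P x, hlt⟩ : Fin r) from h)).trans hl

lemma lo_mono {x y : ℕ} (hy : NonLoop P y) (hxy : x ≤ y) : lo P x ≤ lo P y := by
  obtain ⟨hlt, hg⟩ := lo_mem hy
  exact lo_le ⟨lo P y, hlt⟩ (hxy.trans hg)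

lemma hi_mono {x y : ℕ} (hx : NonLoop P x) (hxy : x ≤ y) : hi P x ≤ hi P y := by
  obtain ⟨hlt, hl⟩ := hi_mem hx
  exact le_hi ⟨hi P x, hlt⟩ (hl.trans hxy)

lemma lo_le_hi {x : ℕ} (hx : NonLoop P x) : lo P x ≤ hi P x := by
  obtain ⟨i, hl, hg⟩ := hx
  exact (lo_le i hg).trans (le_hi i hl)

lemma isPT_mono {ι : Type*} {N : ι → Set ℕ} {S T : Set ℕ} (h : IsPT N S) (hTS : T ⊆ S) :
    IsPT N T := by
  obtain ⟨f, hinj, hmem⟩ := h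
  exact ⟨fun x => f ⟨x.1, hTS x.2⟩,
    fun a b hab => Subtype.ext (Subtype.mk_eq_mk.1 (hinj hab)),
    fun x => hmem ⟨x.1, hTS x.2⟩⟩

lemma nonLoop_of_mem_PT {S : Set ℕ} (h : IsPT P.N S) {x : ℕ} (hx : x ∈ S) : NonLoop P x := by
  obtain ⟨f, _, hmem⟩ := h
  exact ⟨f ⟨x, hx⟩, hmem ⟨x, hx⟩⟩

/-- Counting upper bound: a partial transversal inside `[u,v]` has at most
`hi v + 1 - lo u` elements. -/
lemma count_le {D : Set ℕ} (hD : IsPT P.N D) {u v : ℕ} (hu : NonLoop P u) (hv : NonLoop P v)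
    (hsub : D ⊆ Set.Icc u v) : D.ncard ≤ hi P v + 1 - lo P u := by
  classical
  obtain ⟨f, hinj, hmem⟩ := hD
  have hmaps : ∀ t ∈ D, (fun t => if h : t ∈ D then ((f ⟨t, h⟩ : Fin r) : ℕ) else 0) t ∈
      Set.Icc (lo P u) (hi P v) := by
    intro t ht
    simp only [dif_pos ht]
    have h1 := hmem ⟨t, ht⟩
    obtain ⟨htu, htv⟩ := hsub ht
    constructor
    · exact (lo_mono (nonLoop_of_mem_PT ⟨f, hinj, hmem⟩ ht) htu).trans
        (lo_le _ h1.2)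
    · exact (le_hi _ h1.1).trans (hi_mono (nonLoop_of_mem_PT ⟨f, hinj, hmem⟩ ht) htv)
  have hinj' : Set.InjOn (fun t => if h : t ∈ D then ((f ⟨t, h⟩ : Fin r) : ℕ) else 0) D := by
    intro a ha b hb hab
    simp only [dif_pos ha, dif_pos hb] at hab
    have := hinj (Fin.ext hab)
    exact Subtype.mk_eq_mk.1 this
  have hle := Set.ncard_le_ncard_of_injOn _ hmaps hinj' (Set.finite_Icc _ _)
  have : (Set.Icc (lo P u) (hi P v)).ncard = hi P v + 1 - lo P u := by
    rw [← Finset.coe_Icc, Set.ncard_coe_finset, Nat.card_Icc]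
  omega

/-- Necessity of the interval-count criterion. -/
lemma crit_nec {S : Set ℕ} (hS : IsPT P.N S) {u v : ℕ} (hu : u ∈ S) (hv : v ∈ S) (huv : u ≤ v) :
    lo P u + (S ∩ Set.Icc u v).ncard ≤ hi P v + 1 := by
  have hnlu := nonLoop_of_mem_PT hS hu
  have hnlv := nonLoop_of_mem_PT hS hv
  have h1 : (S ∩ Set.Icc u v).ncard ≤ hi P v + 1 - lo P u :=
    count_le (isPT_mono hS Set.inter_subset_left) hnlu hnlv Set.inter_subset_right
  have h2 : 1 ≤ (S ∩ Set.Icc u v).ncard := by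
    exact (Set.ncard_pos ((Set.finite_Icc u v).inter_of_right S)).2
      ⟨u, hu, Set.mem_Icc.2 ⟨le_refl u, huv⟩⟩
  omega

/-- Sufficiency of the interval-count criterion: greedy matching. -/
lemma crit_suff {S : Set ℕ} (hfin : S.Finite) (hnl : ∀ x ∈ S, NonLoop P x)
    (hcrit : ∀ u ∈ S, ∀ v ∈ S, u ≤ v → lo P u + (S ∩ Set.Icc u v).ncard ≤ hi P v + 1) :
    IsPT P.N S := by
  classical
  set k := hfin.toFinset.card with hk
  set e : Fin k ≃o hfin.toFinset := hfin.toFinset.orderIsoOfFin rfl with he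
  set s : Fin k → ℕ := fun j => (e j : ℕ) with hs
  have hsmem : ∀ j, s j ∈ S := fun j => hfin.mem_toFinset.1 (e j).2
  have hsmono : StrictMono s := fun a b hab => e.strictMono hab
  -- indexed criterion
  have hidx : ∀ p q : Fin k, p ≤ q → lo P (s p) + ((q : ℕ) - p) + 1 ≤ hi P (s q) + 1 := by
    intro p q hpq
    have himg : s '' (Set.Icc p q) ⊆ S ∩ Set.Icc (s p) (s q) := by
      rintro _ ⟨j, hj, rfl⟩
      exact ⟨hsmem j, hsmono.monotone hj.1, hsmono.monotone hj.2⟩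
    have hcard : (s '' (Set.Icc p q)).ncard = (q : ℕ) - p + 1 := by
      rw [Set.ncard_image_of_injOn (hsmono.injective.injOn)]
      rw [← Finset.coe_Icc, Set.ncard_coe_finset, Fin.card_Icc]
      have := Fin.le_def.1 hpq
      omega
    have hle : (q : ℕ) - p + 1 ≤ (S ∩ Set.Icc (s p) (s q)).ncard := by
      rw [← hcard]
      exact Set.ncard_le_ncard himg ((Set.finite_Icc _ _).inter_of_right S)
    have := hcrit (s p) (hsmem p) (s q) (hsmem q) (hsmono.monotone hpq)
    omega
  -- greedy assignment
  have hne : ∀ j : Fin k, (Finset.Iic j).Nonempty := fun j => ⟨j, Finset.mem_Iic.2 le_rfl⟩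
  set φ : Fin k → ℕ := fun j => (Finset.Iic j).sup' (hne j) (fun p => lo P (s p) + ((j : ℕ) - p))
    with hφ
  have hφ_le : ∀ j, φ j ≤ hi P (s j) := by
    intro j
    apply Finset.sup'_le
    intro p hp
    have := hidx p j (Finset.mem_Iic.1 hp)
    omega
  have hφ_ge : ∀ j, lo P (s j) ≤ φ j := by
    intro j
    have h : lo P (s j) + ((j : ℕ) - (j : ℕ)) ≤ φ j :=
      Finset.le_sup' (fun p => lo P (s p) + ((j : ℕ) - p)) (Finset.mem_Iic.2 (le_refl j))
    omega
  have hφ_mono : StrictMono φ := by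
    intro j j' hjj'
    rw [Finset.sup'_lt_iff]
    intro p hp
    have hpj : p ≤ j := Finset.mem_Iic.1 hp
    have hpj' : p ∈ Finset.Iic j' := Finset.mem_Iic.2 (hpj.trans hjj'.le)
    have h1 : lo P (s p) + ((j' : ℕ) - p) ≤ φ j' :=
      Finset.le_sup' (fun p => lo P (s p) + ((j' : ℕ) - p)) hpj'
    have h2 : (p : ℕ) ≤ j := Fin.le_def.1 hpj
    have h3 : (j : ℕ) < j' := Fin.lt_def.1 hjj'
    omega
  have hφ_lt : ∀ j, φ j < r := fun j => (hφ_le j).trans_lt (hi_lt (hnl _ (hsmem j)))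
  set F : Fin k → Fin r := fun j => ⟨φ j, hφ_lt j⟩ with hF
  have hF_mem : ∀ j, s j ∈ P.N (F j) := by
    intro j
    constructor
    · exact l_le_of_le_hi (hnl _ (hsmem j)) (F j) (hφ_le j)
    · exact le_g_of_lo_le (hnl _ (hsmem j)) (F j) (hφ_ge j)
  refine ⟨fun x => F (e.symm ⟨x.1, hfin.mem_toFinset.2 x.2⟩), ?_, ?_⟩
  · intro a b hab
    have h1 : e.symm ⟨a.1, hfin.mem_toFinset.2 a.2⟩ = e.symm ⟨b.1, hfin.mem_toFinset.2 b.2⟩ := by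
      apply hφ_mono.injective
      simpa [hF, Fin.ext_iff] using hab
    have h2 := e.symm.injective h1
    exact Subtype.ext (Subtype.mk_eq_mk.1 h2)
  · intro x
    have hx : s (e.symm ⟨x.1, hfin.mem_toFinset.2 x.2⟩) = (x : ℕ) := by
      simp [hs]
    rw [← hx]
    exact hF_mem _

/-- The key exchange lemma: if both `C \ {x} + y` and `C \ {z} + y` are partial
transversals, with `x < y < z` and `x, z ∈ C`, `y ∉ C`, then `C` itself is one. -/
lemma lemmaA {C : Set ℕ} {x y z : ℕ} (hxC : x ∈ C) (hzC : z ∈ C) (hxy : x < y) (hyz : y < z)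
    (hyC : y ∉ C) (hfin : C.Finite)
    (hDx : IsPT P.N (insert y (C \ {x}))) (hDz : IsPT P.N (insert y (C \ {z}))) :
    IsPT P.N C := by
  have hnl : ∀ c ∈ C, NonLoop P c := by
    intro c hc
    by_cases hcx : c = x
    · exact nonLoop_of_mem_PT hDz (Set.mem_insert_of_mem _ ⟨hcx ▸ hc, by simp [hcx]; omega⟩)
    · exact nonLoop_of_mem_PT hDx (Set.mem_insert_of_mem _ ⟨hc, hcx⟩)
  apply crit_suff hfin hnl
  intro u hu v hv huv
  obtain ⟨D, hD, hcount⟩ : ∃ D, IsPT P.N D ∧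
      (C ∩ Set.Icc u v).ncard ≤ (D ∩ Set.Icc u v).ncard ∧ D.Finite := by
    by_cases hyv : y ≤ v
    · refine ⟨insert y (C \ {x}), hDx, ?_, hfin.diff.insert y⟩
      by_cases hxu : x < u
      · apply Set.ncard_le_ncard ?_ ((hfin.diff.insert y).inter_of_left _)
        rintro c ⟨hc, hc1, hc2⟩
        refine ⟨Set.mem_insert_of_mem _ ⟨hc, ?_⟩, hc1, hc2⟩
        intro h
        rw [Set.mem_singleton_iff] at h
        omega
      · push_neg at hxu
        have hxIcc : x ∈ Set.Icc u v := ⟨hxu, by omega⟩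
        have hsub : insert y ((C ∩ Set.Icc u v) \ {x}) ⊆ insert y (C \ {x}) ∩ Set.Icc u v := by
          rintro c (rfl | ⟨⟨hc1, hc2⟩, hc3⟩)
          · exact ⟨Set.mem_insert _ _, by omega, hyv⟩
          · exact ⟨Set.mem_insert_of_mem _ ⟨hc1, hc3⟩, hc2⟩
        have hfin1 : ((C ∩ Set.Icc u v) \ {x}).Finite := (hfin.inter_of_left _).diff
        have h1 : (insert y ((C ∩ Set.Icc u v) \ {x})).ncard
            = ((C ∩ Set.Icc u v) \ {x}).ncard + 1 :=
          Set.ncard_insert_of_notMem (fun h => hyC h.1.1) hfin1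
        have h2 : ((C ∩ Set.Icc u v) \ {x}).ncard + 1 = (C ∩ Set.Icc u v).ncard :=
          Set.ncard_diff_singleton_add_one ⟨hxC, hxIcc⟩ (hfin.inter_of_left _)
        have h3 := Set.ncard_le_ncard hsub ((hfin.diff.insert y).inter_of_left _)
        omega
    · push_neg at hyv
      refine ⟨insert y (C \ {z}), hDz, ?_, hfin.diff.insert y⟩
      apply Set.ncard_le_ncard ?_ ((hfin.diff.insert y).inter_of_left _)
      rintro c ⟨hc, hc1, hc2⟩
      refine ⟨Set.mem_insert_of_mem _ ⟨hc, ?_⟩, hc1, hc2⟩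
      intro h
      rw [Set.mem_singleton_iff] at h
      omega
  obtain ⟨hcount, hDfin⟩ := hcount
  set T : Set ℕ := D ∩ Set.Icc u v with hT
  have hTfin : T.Finite := hDfin.inter_of_left _
  have hTne : T.Nonempty := by
    rw [← Set.ncard_pos hTfin]
    have : 1 ≤ (C ∩ Set.Icc u v).ncard :=
      (Set.ncard_pos (hfin.inter_of_left _)).2 ⟨u, hu, le_refl u, huv⟩
    omega
  have hbdd : BddAbove T := hTfin.bddAbove
  set u' : ℕ := sInf T with hu'
  set v' : ℕ := sSup T with hv'
  have hu'T : u' ∈ T := Nat.sInf_mem hTne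
  have hv'T : v' ∈ T := Nat.sSup_mem hTne hbdd
  have hu'v' : u' ≤ v' := Nat.sInf_le hv'T
  have hTeq : D ∩ Set.Icc u' v' = T := by
    apply Set.Subset.antisymm
    · rintro t ⟨htD, ht1, ht2⟩
      exact ⟨htD, hu'T.2.1.trans ht1, ht2.trans hv'T.2.2⟩
    · rintro t htT
      exact ⟨htT.1, Nat.sInf_le htT, le_csSup hbdd htT⟩
  have hnec := crit_nec hD hu'T.1 hv'T.1 hu'v'
  rw [hTeq] at hnec
  have hlo : lo P u ≤ lo P u' :=
    lo_mono (nonLoop_of_mem_PT hD hu'T.1) hu'T.2.1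
  have hhi : hi P v' ≤ hi P v :=
    hi_mono (nonLoop_of_mem_PT hD hv'T.1) hv'T.2.2
  omega

lemma isPT_image {T : Set (Fin r)} (ρ : Fin r → ℕ) (hmem : ∀ i ∈ T, ρ i ∈ P.N i) :
    IsPT P.N (ρ '' T) := by
  classical
  refine ⟨fun x => Classical.choose x.2, ?_, ?_⟩
  · intro x1 x2 h
    apply Subtype.ext
    have e1 := (Classical.choose_spec x1.2).2
    have e2 := (Classical.choose_spec x2.2).2
    rw [← e1, ← e2]
    exact congrArg ρ h
  · intro x
    have e1 := (Classical.choose_spec x.2).1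
    have e2 := (Classical.choose_spec x.2).2
    rw [← e2] at *
    exact hmem _ e1


end LPM


open LPM in
/-- Every nontrivial connected flat `X` of a lattice path
matroid `M[N]` is an interval of consecutive integers, and `n(X)` is an
interval of exactly `r(X)` consecutive indices. -/
theorem stmt13 {m r : ℕ} (hr : 1 ≤ r) (P : LPP m r)
    (M : Matroid ℕ) (hM : IsLPMOf P M)
    (X : Set ℕ) (hX : NTConnFlat M X) :
    (∃ a b : ℕ, X = Set.Icc a b) ∧
      (∀ i j t : Fin r, i ≤ j → j ≤ t →
        (X ∩ P.N i).Nonempty → (X ∩ P.N t).Nonempty → (X ∩ P.N j).Nonempty) ∧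
      {i : Fin r | (X ∩ P.N i).Nonempty}.ncard = rk M X := by

  obtain ⟨hE, hInd⟩ := hM
  obtain ⟨hFlat, hDep, hConn⟩ := hX
  have hXE : X ⊆ M.E := hFlat.subset_ground
  have hXsub : X ⊆ Set.Icc 1 (m + r) := hE ▸ hXE
  have hXfin : X.Finite := (Set.finite_Icc _ _).subset hXsub
  have hXne : X.Nonempty := by
    rw [Set.nonempty_iff_ne_empty]
    rintro rfl
    exact hDep M.empty_indep
  set a := sInf X with ha_def
  set b := sSup X with hb_def
  have haX : a ∈ X := Nat.sInf_mem hXne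
  have hbX : b ∈ X := Nat.sSup_mem hXne hXfin.bddAbove
  have hab : a ≤ b := Nat.sInf_le hbX
  have h1a : 1 ≤ a := (hXsub haX).1
  have hbmr : b ≤ m + r := (hXsub hbX).2
  have hXIcc : X ⊆ Set.Icc a b := fun x hx => ⟨Nat.sInf_le hx, le_csSup hXfin.bddAbove hx⟩
  -- circuits from connectivity
  have circ : ∀ p ∈ X, ∀ q ∈ X, p ≠ q → ∃ C, C ⊆ X ∧ ¬ M.Indep C ∧
      (∀ D : Set ℕ, D ⊂ C → M.Indep D) ∧ p ∈ C ∧ q ∈ C := by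
    intro p hp q hq hpq
    obtain ⟨C, ⟨hCE, hCdep, hCmin⟩, hpC, hqC⟩ := hConn p hp q hq hpq
    rw [Matroid.restrict_ground_eq] at hCE
    refine ⟨C, hCE, fun h => hCdep (Matroid.restrict_indep_iff.2 ⟨h, hCE⟩), ?_, hpC, hqC⟩
    exact fun D hD => (Matroid.restrict_indep_iff.1 (hCmin D hD)).1
  -- Part 1 : X is an interval
  have part1 : X = Set.Icc a b := by
    refine Set.Subset.antisymm hXIcc ?_
    rintro y ⟨hay, hyb⟩
    by_contra hyX
    have hya : y ≠ a := fun h => hyX (h ▸ haX)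
    have hyb' : y ≠ b := fun h => hyX (h ▸ hbX)
    have hay' : a < y := lt_of_le_of_ne hay (Ne.symm hya)
    have hyb'' : y < b := lt_of_le_of_ne hyb hyb'
    obtain ⟨C, hCX, hCdep, hCmin, haC, hbC⟩ := circ a haX b hbX (by omega)
    have hyC : y ∉ C := fun h => hyX (hCX h)
    have hIa : M.Indep (C \ {a}) := hCmin _ (Set.sdiff_singleton_ssubset.2 haC)
    have hIb : M.Indep (C \ {b}) := hCmin _ (Set.sdiff_singleton_ssubset.2 hbC)
    have hyE : y ∈ M.E := by rw [hE]; exact ⟨by omega, by omega⟩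
    by_cases hia : M.Indep (insert y (C \ {a}))
    · by_cases hib : M.Indep (insert y (C \ {b}))
      · -- contradiction via lemmaA
        have hPTa : IsPT P.N (insert y (C \ {a})) := ((hInd _).1 hia).2
        have hPTb : IsPT P.N (insert y (C \ {b})) := ((hInd _).1 hib).2
        have hCfin : C.Finite := hXfin.subset hCX
        have : IsPT P.N C := lemmaA haC hbC hay' hyb'' hyC hCfin hPTa hPTb
        exact hCdep ((hInd C).2 ⟨(hCX.trans hXsub), this⟩)
      · have hymem : y ∈ M.closure (C \ {b}) := by
          by_contra hc
          exact hib ((hIb.insert_indep_iff).2 (Or.inl ⟨hyE, hc⟩))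
        have : y ∈ X := by
          have h2 : M.closure (C \ {b}) ⊆ M.closure X :=
            M.closure_subset_closure ((Set.diff_subset).trans hCX)
          have h3 := h2 hymem
          rwa [hFlat.closure] at h3
        exact hyX this
    · have hymem : y ∈ M.closure (C \ {a}) := by
        by_contra hc
        exact hia ((hIa.insert_indep_iff).2 (Or.inl ⟨hyE, hc⟩))
      have : y ∈ X := by
        have h2 : M.closure (C \ {a}) ⊆ M.closure X :=
          M.closure_subset_closure ((Set.diff_subset).trans hCX)
        have h3 := h2 hymem
        rwa [hFlat.closure] at h3
      exact hyX this
  refine ⟨⟨a, b, part1⟩, ?_, ?_⟩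
  · -- Part 2 : n(X) is an interval of indices
    rintro i j t hij hjt ⟨p, hpX, hpl, hpg⟩ ⟨q, hqX, hql, hqg⟩
    obtain ⟨hpa, hpb⟩ := hXIcc hpX
    obtain ⟨hqa, hqb⟩ := hXIcc hqX
    have h1 : P.l j ≤ P.l t := P.l_strictMono.monotone hjt
    have h2 : P.g i ≤ P.g j := P.g_strictMono.monotone hij
    have h3 := P.l_le_g j
    refine ⟨max a (P.l j), ?_, ?_, ?_⟩
    · rw [part1]; exact ⟨le_max_left _ _, by omega⟩
    · exact le_max_right _ _
    · omega
  · -- Part 3 : the count equals the rank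
    by_cases hab' : a = b
    · -- degenerate case : `X` is a single loop
      have hXa : X = {a} := by rw [part1, hab', Set.Icc_self]
      have hnl : ¬ NonLoop P a := by
        rintro ⟨i, hl, hg⟩
        apply hDep
        refine (hInd X).2 ⟨hXsub, ?_⟩
        have hmem : ∀ w : X, (w : ℕ) = a := fun w =>
          Set.mem_singleton_iff.1 (hXa.subset w.2)
        refine ⟨fun _ => i, fun u v _ => Subtype.ext ((hmem u).trans (hmem v).symm), ?_⟩
        intro u
        rw [hmem u]
        exact ⟨hl, hg⟩
      have hS : {i : Fin r | (X ∩ P.N i).Nonempty} = ∅ := by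
        ext i
        simp only [Set.mem_setOf_eq, Set.mem_empty_iff_false, iff_false]
        rintro ⟨w, hwX, hwl, hwg⟩
        rw [hXa, Set.mem_singleton_iff] at hwX
        exact hnl ⟨i, hwX ▸ hwl, hwX ▸ hwg⟩
      have hrk : rk M X = 0 := by
        apply Nat.le_zero.1
        show sSup {n | ∃ I, I ⊆ X ∧ M.Indep I ∧ I.ncard = n} ≤ 0
        have hne0 : {n | ∃ I, I ⊆ X ∧ M.Indep I ∧ I.ncard = n}.Nonempty :=
          ⟨0, ∅, Set.empty_subset _, M.empty_indep, by simp⟩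
        apply csSup_le hne0
        rintro n ⟨I, hIX, hIind, rfl⟩
        rw [hXa] at hIX
        rcases Set.subset_singleton_iff_eq.1 hIX with h | h
        · simp [h]
        · exact absurd (h ▸ hIind : M.Indep {a}) (hXa ▸ hDep)
      rw [hS, hrk, Set.ncard_empty]
    · have haltb : a < b := lt_of_le_of_ne hab hab'
      obtain ⟨C, hCX, hCdep, hCmin, haC, hbC⟩ := circ a haX b hbX (by omega)
      have hCfin : C.Finite := hXfin.subset hCX
      have hIa : M.Indep (C \ {a}) := hCmin _ (Set.sdiff_singleton_ssubset.2 haC)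
      have hIb : M.Indep (C \ {b}) := hCmin _ (Set.sdiff_singleton_ssubset.2 hbC)
      have hCnl : ∀ c ∈ C, NonLoop P c := by
        intro c hc
        by_cases hca : c = a
        · refine nonLoop_of_mem_PT ((hInd _).1 hIb).2 ⟨hc, ?_⟩
          simp only [Set.mem_singleton_iff, hca]
          omega
        · exact nonLoop_of_mem_PT ((hInd _).1 hIa).2 ⟨hc, by simp [hca]⟩
      have hCPTnot : ¬ IsPT P.N C := fun h => hCdep ((hInd C).2 ⟨hCX.trans hXsub, h⟩)
      have hfail : ¬ ∀ u ∈ C, ∀ v ∈ C, u ≤ v →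
          lo P u + (C ∩ Set.Icc u v).ncard ≤ hi P v + 1 :=
        fun h => hCPTnot (crit_suff hCfin hCnl h)
      push_neg at hfail
      obtain ⟨u, hu, v, hv, huv, hgt⟩ := hfail
      have hau : a ≤ u := Nat.sInf_le (hCX hu)
      have hvb : v ≤ b := le_csSup hXfin.bddAbove (hCX hv)
      have hua : u = a := by
        by_contra h
        have hPT := ((hInd _).1 hIa).2
        have heq : (C \ {a}) ∩ Set.Icc u v = C ∩ Set.Icc u v := by
          ext c
          simp only [Set.mem_inter_iff, Set.mem_diff, Set.mem_singleton_iff, Set.mem_Icc]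
          constructor
          · rintro ⟨⟨h1, _⟩, h2⟩; exact ⟨h1, h2⟩
          · rintro ⟨h1, h2, h3⟩; exact ⟨⟨h1, by omega⟩, h2, h3⟩
        have hnec := crit_nec hPT (show u ∈ C \ {a} from ⟨hu, by simp; omega⟩)
          (show v ∈ C \ {a} from ⟨hv, by simp; omega⟩) huv
        rw [heq] at hnec
        omega
      have hvb' : v = b := by
        by_contra h
        have hPT := ((hInd _).1 hIb).2
        have heq : (C \ {b}) ∩ Set.Icc u v = C ∩ Set.Icc u v := by
          ext c
          simp only [Set.mem_inter_iff, Set.mem_diff, Set.mem_singleton_iff, Set.mem_Icc]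
          constructor
          · rintro ⟨⟨h1, _⟩, h2⟩; exact ⟨h1, h2⟩
          · rintro ⟨h1, h2, h3⟩; exact ⟨⟨h1, by omega⟩, h2, h3⟩
        have hnec := crit_nec hPT (show u ∈ C \ {b} from ⟨hu, by simp; omega⟩)
          (show v ∈ C \ {b} from ⟨hv, by simp; omega⟩) huv
        rw [heq] at hnec
        omega
      have hkey : hi P b + 2 ≤ lo P a + C.ncard := by
        have hCIcc : C ∩ Set.Icc a b = C :=
          Set.inter_eq_self_of_subset_left (hCX.trans hXIcc)
        rw [hua, hvb', hCIcc] at hgt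
        omega
      have hnla : NonLoop P a := hCnl a haC
      have hnlb : NonLoop P b := hCnl b hbC
      have hCcard : C.ncard ≤ b + 1 - a := by
        have h1 := Set.ncard_le_ncard (hCX.trans hXIcc) (Set.finite_Icc a b)
        have h2 : (Set.Icc a b).ncard = b + 1 - a := by
          rw [← Finset.coe_Icc, Set.ncard_coe_finset, Nat.card_Icc]
        omega
      have hlohi : lo P a ≤ hi P b := (lo_le_hi hnla).trans (hi_mono hnla hab)
      have hSeq : {i : Fin r | (X ∩ P.N i).Nonempty}
          = {i : Fin r | lo P a ≤ (i : ℕ) ∧ (i : ℕ) ≤ hi P b} := by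
        ext i
        simp only [Set.mem_setOf_eq]
        constructor
        · rintro ⟨w, hwX, hwl, hwg⟩
          obtain ⟨hwa, hwb⟩ := hXIcc hwX
          exact ⟨lo_le i (hwa.trans hwg), le_hi i (hwl.trans hwb)⟩
        · rintro ⟨h1, h2⟩
          refine ⟨max a (P.l i), ?_, le_max_right _ _, ?_⟩
          · rw [part1]
            have h3 := l_le_of_le_hi hnlb i h2
            exact ⟨le_max_left _ _, by omega⟩
          · have h3 := le_g_of_lo_le hnla i h1
            have h4 := P.l_le_g i
            omega
      have hScard : {i : Fin r | (X ∩ P.N i).Nonempty}.ncard = hi P b + 1 - lo P a := by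
        have hinj : Set.InjOn (fun i : Fin r => (i : ℕ))
            {i : Fin r | (X ∩ P.N i).Nonempty} := fun i _ j _ h => Fin.ext h
        have himg : (fun i : Fin r => (i : ℕ)) '' {i : Fin r | (X ∩ P.N i).Nonempty}
            = Set.Icc (lo P a) (hi P b) := by
          ext w
          constructor
          · rintro ⟨i, hi', rfl⟩
            rw [hSeq] at hi'
            exact ⟨hi'.1, hi'.2⟩
          · rintro ⟨h1, h2⟩
            have hw : w < r := lt_of_le_of_lt h2 (hi_lt hnlb)
            exact ⟨⟨w, hw⟩, by rw [hSeq]; exact ⟨h1, h2⟩, rfl⟩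
        have h5 := Set.ncard_image_of_injOn hinj
        rw [himg] at h5
        rw [← h5, ← Finset.coe_Icc, Set.ncard_coe_finset, Nat.card_Icc]
      have hrk : rk M X = hi P b + 1 - lo P a := by
        apply le_antisymm
        · show sSup {n | ∃ I, I ⊆ X ∧ M.Indep I ∧ I.ncard = n} ≤ hi P b + 1 - lo P a
          have hne0 : {n | ∃ I, I ⊆ X ∧ M.Indep I ∧ I.ncard = n}.Nonempty :=
            ⟨0, ∅, Set.empty_subset _, M.empty_indep, by simp⟩
          apply csSup_le hne0
          rintro n ⟨I, hIX, hIind, rfl⟩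
          exact count_le ((hInd I).1 hIind).2 hnla hnlb (hIX.trans hXIcc)
        · show hi P b + 1 - lo P a ≤ sSup {n | ∃ I, I ⊆ X ∧ M.Indep I ∧ I.ncard = n}
          apply le_csSup
          · refine ⟨m + r + 1, ?_⟩
            rintro n ⟨I, hIX, hIind, rfl⟩
            have h6 := Set.ncard_le_ncard (hIX.trans hXsub) (Set.finite_Icc _ _)
            have h7 : (Set.Icc 1 (m + r)).ncard = m + r + 1 - 1 := by
              rw [← Finset.coe_Icc, Set.ncard_coe_finset, Nat.card_Icc]
            omega
          · set T : Set (Fin r) := {i : Fin r | lo P a ≤ (i : ℕ) ∧ (i : ℕ) ≤ hi P b} with hT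
            set ρ : Fin r → ℕ := fun i => max (P.l i) (a + ((i : ℕ) - lo P a)) with hρ
            have hglo : a ≤ P.g ⟨lo P a, lo_lt hnla⟩ := (lo_mem hnla).2
            have hρmem : ∀ i ∈ T, ρ i ∈ P.N i := by
              rintro i ⟨h1, h2⟩
              refine ⟨le_max_left _ _, ?_⟩
              show max (P.l i) (a + ((i : ℕ) - lo P a)) ≤ P.g i
              have h4 := P.l_le_g i
              have h5 := strictMono_gap' P.g_strictMono ⟨lo P a, lo_lt hnla⟩ i h1
              simp only at h5
              omega
            have hIPT : IsPT P.N (ρ '' T) := isPT_image ρ hρmem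
            have hIX : ρ '' T ⊆ X := by
              rintro w ⟨i, ⟨h1, h2⟩, rfl⟩
              rw [part1]
              have h3 := l_le_of_le_hi hnlb i h2
              refine ⟨le_trans (by omega) (le_max_right _ _), ?_⟩
              show max (P.l i) (a + ((i : ℕ) - lo P a)) ≤ b
              omega
            have hinjρ : Set.InjOn ρ T := by
              intro i hi' j hj' hij
              by_contra hne
              have hmono : ∀ p ∈ T, ∀ q : Fin r, p < q → ρ p < ρ q := by
                rintro p ⟨hp1, _⟩ q hpq
                have hl := P.l_strictMono hpq
                have hval : (p : ℕ) < q := hpq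
                apply max_lt_max hl (by omega)
              rcases lt_or_gt_of_ne (fun h : i = j => hne h) with hlt | hlt
              · exact absurd hij (hmono i hi' j hlt).ne
              · exact absurd hij.symm (hmono j hj' i hlt).ne
            refine ⟨ρ '' T, hIX, (hInd _).2 ⟨hIX.trans hXsub, hIPT⟩, ?_⟩
            rw [Set.ncard_image_of_injOn hinjρ, ← hSeq, hScard]
      rw [hScard, hrk]
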